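/- arXiv:1007.3000 — 5 statements merged into one kernel-verified Lean document; each statement's English description precedes it below -/
import Mathlib

section
/- There exists a constant c₂ > 0 such that for all ε > 0 sufficiently small and all t with −√ε ≤ t ≤ √ε, we have ∫_{−1}^{t} exp((t² − s²)/(2ε)) ds ≤ c₂·√ε. -/
open MeasureTheory

/-- For `|t| ≤ √ε`, the integral `∫_{−1}^{t} exp((t² − s²)/(2ε)) ds` is `O(√ε)`. -/
theorem stmt_6 :
    ∃ c₂ ε₀ : ℝ, 0 < c₂ ∧ 0 < ε₀ ∧
      ∀ ε : ℝ, 0 < ε → ε ≤ ε₀ →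
        ∀ t : ℝ, -Real.sqrt ε ≤ t → t ≤ Real.sqrt ε →
          (∫ s in (-1 : ℝ)..t, Real.exp ((t ^ 2 - s ^ 2) / (2 * ε))) ≤
            c₂ * Real.sqrt ε := by
  refine ⟨Real.exp (1/2) * Real.sqrt (2 * Real.pi), 1, by positivity, one_pos, ?_⟩
  intro ε hε hε1 t ht1 ht2
  have hsq1 : Real.sqrt ε ≤ 1 := by
    rw [show (1:ℝ) = Real.sqrt 1 by simp]
    exact Real.sqrt_le_sqrt hε1
  have hle : (-1:ℝ) ≤ t := le_trans (by linarith) ht1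
  have habs : |t| ≤ Real.sqrt ε := abs_le.mpr ⟨ht1, ht2⟩
  have ht2' : t ^ 2 ≤ ε := by
    calc t ^ 2 = |t| ^ 2 := (sq_abs t).symm
    _ ≤ (Real.sqrt ε) ^ 2 := pow_le_pow_left₀ (abs_nonneg t) habs 2
    _ = ε := Real.sq_sqrt hε.le
  set b : ℝ := 1 / (2 * ε) with hb_def
  have hb : 0 < b := by positivity
  have hmono : (∫ s in (-1:ℝ)..t, Real.exp ((t ^ 2 - s ^ 2) / (2 * ε)))
      ≤ ∫ s in (-1:ℝ)..t, Real.exp (1/2) * Real.exp (-b * s ^ 2) := by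
    apply intervalIntegral.integral_mono_on hle
    · exact (Real.continuous_exp.comp (by continuity)).intervalIntegrable _ _
    · exact (continuous_const.mul (Real.continuous_exp.comp (by continuity))).intervalIntegrable _ _
    · intro s _
      have heq : (t ^ 2 - s ^ 2) / (2 * ε) = t ^ 2 / (2 * ε) + (-b * s ^ 2) := by
        rw [hb_def]; field_simp; ring
      rw [heq, Real.exp_add]
      refine mul_le_mul_of_nonneg_right (Real.exp_le_exp.mpr ?_) (Real.exp_pos _).le
      rw [div_le_div_iff₀ (by positivity) (by norm_num)]
      linarith
  have hgauss : (∫ s in (-1:ℝ)..t, Real.exp (-b * s ^ 2)) ≤ Real.sqrt (2 * Real.pi) * Real.sqrt ε := by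
    have hint : Integrable (fun s : ℝ => Real.exp (-b * s ^ 2)) := by
      simpa [sq] using integrable_exp_neg_mul_sq hb
    have h1 : (∫ s in (-1:ℝ)..t, Real.exp (-b * s ^ 2))
        ≤ ∫ s : ℝ, Real.exp (-b * s ^ 2) := by
      rw [intervalIntegral.integral_of_le hle]
      exact setIntegral_le_integral hint (Filter.Eventually.of_forall fun s => (Real.exp_pos _).le)
    have h2 : (∫ s : ℝ, Real.exp (-b * s ^ 2)) = Real.sqrt (Real.pi / b) := by
      simpa [sq] using integral_gaussian b
    have h3 : Real.pi / b = 2 * Real.pi * ε := by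
      rw [hb_def]; field_simp
    calc (∫ s in (-1:ℝ)..t, Real.exp (-b * s ^ 2)) ≤ Real.sqrt (Real.pi / b) := h2 ▸ h1
    _ = Real.sqrt (2 * Real.pi) * Real.sqrt ε := by
        rw [h3, Real.sqrt_mul (by positivity)]
  calc (∫ s in (-1:ℝ)..t, Real.exp ((t ^ 2 - s ^ 2) / (2 * ε)))
      ≤ ∫ s in (-1:ℝ)..t, Real.exp (1/2) * Real.exp (-b * s ^ 2) := hmono
  _ = Real.exp (1/2) * ∫ s in (-1:ℝ)..t, Real.exp (-b * s ^ 2) := by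
      rw [intervalIntegral.integral_const_mul]
  _ ≤ Real.exp (1/2) * (Real.sqrt (2 * Real.pi) * Real.sqrt ε) :=
      mul_le_mul_of_nonneg_left hgauss (Real.exp_pos _).le
  _ = Real.exp (1/2) * Real.sqrt (2 * Real.pi) * Real.sqrt ε := by ring
end

section
/- There exists a constant c₂ > 0 such that for all ε > 0 sufficiently small and all t with −1 ≤ t ≤ −√ε, we have ∫_{−1}^{t} exp((t² − s²)/(2ε)) ds ≤ c₂·ε/|t|. -/
/-- For `−1 ≤ t ≤ −√ε`, the integral `∫_{−1}^{t} exp((t² − s²)/(2ε)) ds` is `O(ε/|t|)`. -/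
theorem stmt_7 :
    ∃ c₂ ε₀ : ℝ, 0 < c₂ ∧ 0 < ε₀ ∧
      ∀ ε : ℝ, 0 < ε → ε ≤ ε₀ →
        ∀ t : ℝ, -1 ≤ t → t ≤ -Real.sqrt ε →
          (∫ s in (-1 : ℝ)..t, Real.exp ((t ^ 2 - s ^ 2) / (2 * ε))) ≤
            c₂ * ε / |t| := by
  refine ⟨1, 1, one_pos, one_pos, fun ε hε hε1 t ht1 ht => ?_⟩
  have hsq : 0 < Real.sqrt ε := Real.sqrt_pos.mpr hε
  have htneg : t < 0 := lt_of_le_of_lt ht (by linarith)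
  have habs : |t| = -t := abs_of_neg htneg
  -- Step 1: pointwise bound
  have hmono : (∫ s in (-1 : ℝ)..t, Real.exp ((t ^ 2 - s ^ 2) / (2 * ε))) ≤
      ∫ s in (-1 : ℝ)..t, Real.exp (t * (t - s) / ε) := by
    apply intervalIntegral.integral_mono_on (by linarith : (-1:ℝ) ≤ t)
    · exact (Continuous.intervalIntegrable (by continuity) _ _)
    · exact (Continuous.intervalIntegrable (by continuity) _ _)
    · intro s hs
      rw [Set.mem_Icc] at hs
      apply Real.exp_le_exp.mpr
      rw [div_le_div_iff₀ (by positivity) (by positivity)]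
      nlinarith [hs.1, hs.2, mul_nonneg (sq_nonneg (t - s)) hε.le]
  refine hmono.trans ?_
  -- Step 2: compute the integral of exp(t(t-s)/ε)
  have hkey : ∀ s : ℝ, HasDerivAt (fun s => (-ε / t) * Real.exp (t * (t - s) / ε))
      (Real.exp (t * (t - s) / ε)) s := by
    intro s
    have h1 : HasDerivAt (fun s : ℝ => t * (t - s) / ε) (-t / ε) s := by
      have : HasDerivAt (fun s : ℝ => t * (t - s) / ε) ((t * (0 - 1)) / ε) s := by
        exact (((hasDerivAt_const s t).sub (hasDerivAt_id s)).const_mul t).div_const ε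
      simpa using this
    have h2 := (Real.hasDerivAt_exp _).comp s h1
    have h3 := h2.const_mul (-ε / t)
    refine h3.congr_deriv ?_
    have ht0 : t ≠ 0 := htneg.ne
    field_simp
  have hInt : (∫ s in (-1 : ℝ)..t, Real.exp (t * (t - s) / ε)) =
      (-ε / t) * Real.exp (t * (t - t) / ε) - (-ε / t) * Real.exp (t * (t - (-1)) / ε) := by
    exact intervalIntegral.integral_eq_sub_of_hasDerivAt (fun s _ => hkey s)
      (Continuous.intervalIntegrable (by continuity) _ _)
  rw [hInt, habs]
  have hexp1 : Real.exp (t * (t - t) / ε) = 1 := by simp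
  have hexp2 : 0 < Real.exp (t * (t - (-1)) / ε) := Real.exp_pos _
  have hεt : 0 < -ε / t := by
    apply div_pos_of_neg_of_neg <;> linarith
  rw [hexp1]
  have : (-ε / t) * Real.exp (t * (t - (-1)) / ε) ≥ 0 := by positivity
  have h4 : (1:ℝ) * ε / -t = -ε / t := by ring
  rw [h4]
  linarith
end

section
/- Let x, y : [0, ∞) → ℝ be continuous with x(0) = y(0), and suppose x(t) = x(0) + ∫_0^t a(s, x(s)) ds + C·w(t) and y(t) = x(0) + ∫_0^t c(s, y(s)) ds + C·w(t) for continuous functions a, c : [0,∞) × ℝ → ℝ, a continuous function w : [0,∞) → ℝ, and a constant C. If a(t, x) < c(t, x) for all t ≥ 0 and all x, then y(t) ≥ x(t) for all t ≥ 0. -/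
open Topology Filter MeasureTheory


/-- A pathwise comparison principle for one-dimensional integral equations
driven by the same continuous path, with strictly ordered drifts. -/
theorem stmt_14 (a c : ℝ → ℝ → ℝ) (ha : Continuous (Function.uncurry a))
    (hc : Continuous (Function.uncurry c)) (w : ℝ → ℝ) (hw : Continuous w) (C : ℝ)
    (x y : ℝ → ℝ) (hx : Continuous x) (hy : Continuous y)
    (hxy0 : y 0 = x 0)
    (hxeq : ∀ t, 0 ≤ t → x t = x 0 + (∫ s in (0 : ℝ)..t, a s (x s)) + C * w t)
    (hyeq : ∀ t, 0 ≤ t → y t = x 0 + (∫ s in (0 : ℝ)..t, c s (y s)) + C * w t)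
    (hlt : ∀ t, 0 ≤ t → ∀ u : ℝ, a t u < c t u) :
    ∀ t, 0 ≤ t → x t ≤ y t := by
  set f : ℝ → ℝ := fun s => c s (y s) - a s (x s) with hfdef
  have hcy : Continuous (fun s => c s (y s)) := hc.comp (continuous_id.prodMk hy)
  have hax : Continuous (fun s => a s (x s)) := ha.comp (continuous_id.prodMk hx)
  have hf : Continuous f := hcy.sub hax
  set z : ℝ → ℝ := fun t => ∫ s in (0:ℝ)..t, f s with hzdef
  have hz : ∀ t : ℝ, HasDerivAt z (f t) t := fun t =>
    intervalIntegral.integral_hasDerivAt_right (hf.intervalIntegrable 0 t)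
      (hf.stronglyMeasurableAtFilter _ _) hf.continuousAt
  have hzc : Continuous z := continuous_iff_continuousAt.2 fun t => (hz t).continuousAt
  have hzx : ∀ t, 0 ≤ t → z t = y t - x t := by
    intro t ht
    have hsub := intervalIntegral.integral_sub (μ := volume) (hcy.intervalIntegrable 0 t)
      (hax.intervalIntegrable 0 t)
    rw [hyeq t ht, hxeq t ht, hzdef]
    simp only [hfdef]
    rw [hsub]
    ring
  intro t₀ ht₀
  by_contra h
  push_neg at h
  have hzt₀ : z t₀ < 0 := by rw [hzx t₀ ht₀]; linarith
  set S : Set ℝ := {s | s ∈ Set.Icc 0 t₀ ∧ 0 ≤ z s} with hSdef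
  have h0S : (0:ℝ) ∈ S := by
    constructor
    · exact ⟨le_refl 0, ht₀⟩
    · simp [hzdef]
  have hSne : S.Nonempty := ⟨0, h0S⟩
  have hSbdd : BddAbove S := ⟨t₀, fun s hs => hs.1.2⟩
  have hSclosed : IsClosed S :=
    (isClosed_Icc).inter (isClosed_le continuous_const hzc)
  set τ := sSup S with hτdef
  have hτS : τ ∈ S := hSclosed.csSup_mem hSne hSbdd
  have hτ0 : 0 ≤ τ := hτS.1.1
  have hτt₀ : τ < t₀ := lt_of_le_of_ne hτS.1.2 (by
    intro he; rw [he] at hτS; linarith [hτS.2])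
  have hneg : ∀ s, τ < s → s ≤ t₀ → z s < 0 := by
    intro s hs hst
    by_contra hns
    push_neg at hns
    have : s ∈ S := ⟨⟨le_trans hτ0 hs.le, hst⟩, hns⟩
    exact absurd (le_csSup hSbdd this) (not_le.2 hs)
  have hzτle : z τ ≤ 0 := by
    have hne : (𝓝[>] τ).NeBot := nhdsGT_neBot τ
    have htend : Filter.Tendsto z (𝓝[>] τ) (𝓝 (z τ)) :=
      (hzc.continuousAt).continuousWithinAt.tendsto
    refine le_of_tendsto htend ?_
    have h1 : ∀ᶠ s in 𝓝[>] τ, s < t₀ :=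
      Filter.Eventually.filter_mono nhdsWithin_le_nhds (eventually_lt_nhds hτt₀)
    filter_upwards [h1, self_mem_nhdsWithin] with s hs1 hs2
    exact (hneg s hs2 hs1.le).le
  have hzτ : z τ = 0 := le_antisymm hzτle hτS.2
  have hyxτ : y τ = x τ := by
    have := hzx τ hτ0
    rw [hzτ] at this
    linarith
  have hfτ : 0 < f τ := by
    simp only [hfdef]
    rw [hyxτ]
    linarith [hlt τ hτ0 (x τ)]
  have hslope : Filter.Tendsto (slope z τ) (𝓝[≠] τ) (𝓝 (f τ)) :=
    hasDerivAt_iff_tendsto_slope.1 (hz τ)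
  have hev : ∀ᶠ s in 𝓝[≠] τ, 0 < slope z τ s := hslope.eventually (eventually_gt_nhds hfτ)
  have hev' : ∀ᶠ s in 𝓝[>] τ, 0 < slope z τ s :=
    hev.filter_mono (nhdsWithin_mono τ (fun s hs => ne_of_gt hs))
  have h1 : ∀ᶠ s in 𝓝[>] τ, s < t₀ :=
    Filter.Eventually.filter_mono nhdsWithin_le_nhds (eventually_lt_nhds hτt₀)
  have hne : (𝓝[>] τ).NeBot := nhdsGT_neBot τ
  obtain ⟨s, hs1, hs2, hs3⟩ := (hev'.and (h1.and self_mem_nhdsWithin)).exists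
  -- hs1 : 0 < slope z τ s, hs2 : s < t₀, hs3 : τ < s
  have hzs : 0 < z s := by
    have hst : 0 < s - τ := by linarith
    rw [slope_def_field] at hs1
    rcases div_pos_iff.1 hs1 with ⟨h1', _⟩ | ⟨_, h2'⟩
    · linarith
    · linarith
  exact absurd (hneg s hs3 hs2.le) (by linarith)
end

section
/- Assume κ > 1/2 and ε > 0 sufficiently small (κ > 1/2 + ε suffices). For t ≥ √ε, on the curve q = −√((1−κ)t) the deterministic drift satisfies (1/ε)(t·q − q³ + ε) < d/dt[−√((1−κ)t)], i.e., (1/ε)·t^{3/2}·(−κ + ε')·√(1−κ) < −(1/2)t^{−1/2}√(1−κ) where the drift on the curve equals (1/ε)(−κ√(1−κ)t^{3/2} + ε). Hence a deterministic solution that exits the set {|q| ≤ √((1−κ)t)} through the lower boundary cannot re-enter it. -/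
/-- For `κ > 1/2` and `ε` small, on the lower boundary `q = −√((1−κ)t)`, `t ≥ √ε`,
the deterministic drift is smaller than the slope of the boundary curve, so a
solution leaving through the lower boundary cannot re-enter. -/
theorem stmt_16 (κ : ℝ) (hκ1 : 1 / 2 < κ) (hκ2 : κ < 1) :
    ∃ ε₀ : ℝ, 0 < ε₀ ∧
      ∀ ε : ℝ, 0 < ε → ε ≤ ε₀ →
        ∀ t : ℝ, Real.sqrt ε ≤ t →
          (1 / ε) * (t * (-Real.sqrt ((1 - κ) * t)) -
              (-Real.sqrt ((1 - κ) * t)) ^ 3 + ε) <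
            deriv (fun u => -Real.sqrt ((1 - κ) * u)) t := by
  set c : ℝ := 1 - κ with hc_def
  have hc : 0 < c := by simp [hc_def]; linarith
  set δ : ℝ := (κ - 1/2) * c / 2 with hδ_def
  have hδ : 0 < δ := by
    apply div_pos _ (by norm_num)
    exact mul_pos (by linarith) hc
  clear_value c δ
  refine ⟨δ ^ 4 / c ^ 2, by positivity, ?_⟩
  intro ε hε hε0 t htε
  have ht : 0 < t := lt_of_lt_of_le (Real.sqrt_pos.mpr hε) htε
  have hεt : ε ≤ t ^ 2 := by
    have := Real.sq_sqrt hε.le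
    nlinarith [Real.sqrt_nonneg ε]
  have hct : 0 < c * t := mul_pos hc ht
  set s : ℝ := Real.sqrt (c * t) with hs_def
  have hs : 0 < s := Real.sqrt_pos.mpr hct
  have hs2 : s ^ 2 = c * t := Real.sq_sqrt hct.le
  have hs4 : s ^ 4 = c ^ 2 * t ^ 2 := by
    have : s ^ 4 = (s ^ 2) ^ 2 := by ring
    rw [this, hs2]; ring
  clear_value s
  -- compute the derivative
  have h1 : HasDerivAt (fun u : ℝ => c * u) c t := by
    simpa using (hasDerivAt_id t).const_mul c
  have h2 : HasDerivAt (fun u : ℝ => Real.sqrt (c * u)) (1 / (2 * s) * c) t := by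
    rw [hs_def]; exact (Real.hasDerivAt_sqrt (ne_of_gt hct)).comp t h1
  have h3 : HasDerivAt (fun u : ℝ => -Real.sqrt (c * u)) (-(1 / (2 * s) * c)) t := h2.neg
  rw [h3.deriv]
  -- key estimate: ε * s ≤ δ * t ^ 2
  have hεc : ε * c ^ 2 ≤ δ ^ 4 := by
    rw [le_div_iff₀ (by positivity : (0:ℝ) < c ^ 2)] at hε0
    linarith
  have hε3 : ε ^ 3 ≤ t ^ 6 := by
    calc ε ^ 3 ≤ (t ^ 2) ^ 3 := pow_le_pow_left₀ hε.le hεt 3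
      _ = t ^ 6 := by ring
  have hεs : ε * s ≤ δ * t ^ 2 := by
    have h4 : (ε * s) ^ 4 ≤ (δ * t ^ 2) ^ 4 := by
      have h5 : (ε * c ^ 2) * ε ^ 3 ≤ δ ^ 4 * t ^ 6 :=
        mul_le_mul hεc hε3 (by positivity) (by positivity)
      have h6 : (ε * s) ^ 4 = (ε * c ^ 2) * ε ^ 3 * t ^ 2 := by
        rw [mul_pow, hs4]; ring
      have h7 : (δ * t ^ 2) ^ 4 = δ ^ 4 * t ^ 6 * t ^ 2 := by ring
      rw [h6, h7]
      exact mul_le_mul_of_nonneg_right h5 (by positivity)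
    exact le_of_pow_le_pow_left₀ (by norm_num) (mul_nonneg hδ.le (sq_nonneg t)) h4
  have hκc : κ = 1 - c := by rw [hc_def]; ring
  have H : 0 < 2 * (c * t ^ 2) - 2 * (c ^ 2 * t ^ 2) - 2 * (ε * s) - ε * c := by
    have hc2 : c < 1/2 := by rw [hc_def]; linarith
    have h8 : 0 < (1/2 - c) * (c * t ^ 2) :=
      mul_pos (by linarith) (mul_pos hc (by positivity))
    have h9 : ε * c ≤ t ^ 2 * c := mul_le_mul_of_nonneg_right hεt hc.le
    have h10 : δ * t ^ 2 = (1/2 - c) * c / 2 * t ^ 2 := by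
      rw [hδ_def, hκc]; ring
    nlinarith [hεs, h8, h9, h10]
  -- final inequality
  rw [one_div, inv_mul_eq_div, show -(1 / (2 * s) * c) = (-c) / (2 * s) by ring,
    div_lt_div_iff₀ hε (by positivity)]
  have hts2 : t * s ^ 2 = c * t ^ 2 := by rw [hs2]; ring
  nlinarith [hts2, hs4, H]
end

section
/- Let ε, β, δ > 0 with β > δ, and let g : ℝ → ℝ be continuously differentiable with |g| ≤ C₀ and |g'| ≤ L. Then for all t ≥ −T + 2ε^{β−δ}, the quantity ε^{−β}∫_{−T}^{t} e^{−(t−s)ε^{−β}} g(s) ds differs from g(t) by at most C₀(1 + e^{−ε^{−δ}})·e^{−ε^{−δ}} + L·ε^{β}. More precisely: |ε^{−β}∫_{−T}^{t} e^{−(t−s)ε^{−β}} g(s) ds − g(t)| ≤ 2C₀ e^{−ε^{−δ}} + L ε^{β}. -/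
open MeasureTheory


/-- Laplace-method estimate: the exponential kernel `ε^{−β} e^{−(t−s)ε^{−β}}`
averages `g` to within `2C₀ e^{−ε^{−δ}} + L ε^β` of `g(t)`. -/
theorem stmt_18 (ε β δ T C₀ L : ℝ) (hε : 0 < ε) (hβ : 0 < β) (hδ : 0 < δ)
    (hβδ : δ < β) (g : ℝ → ℝ) (hg : ContDiff ℝ 1 g)
    (hgC : ∀ s, |g s| ≤ C₀) (hgL : ∀ s, |deriv g s| ≤ L) :
    ∀ t : ℝ, -T + 2 * ε ^ (β - δ) ≤ t →
      |ε ^ (-β) * (∫ s in (-T)..t, Real.exp (-(t - s) * ε ^ (-β)) * g s) - g t| ≤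
        2 * C₀ * Real.exp (-ε ^ (-δ)) + L * ε ^ β := by
  intro t ht
  have hC₀ : 0 ≤ C₀ := le_trans (abs_nonneg _) (hgC 0)
  have hL : 0 ≤ L := le_trans (abs_nonneg _) (hgL 0)
  set a : ℝ := ε ^ (-β) with ha_def
  have ha : 0 < a := Real.rpow_pos_of_pos hε _
  have hεbd : (0:ℝ) < ε ^ (β - δ) := Real.rpow_pos_of_pos hε _
  set m : ℝ := t - ε ^ (β - δ) with hm_def
  have hTm : -T ≤ m := by simp only [hm_def]; linarith
  have hmt : m ≤ t := by simp only [hm_def]; linarith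
  have hcont : Continuous g := hg.continuous
  have hgdiff : Differentiable ℝ g := hg.differentiable one_ne_zero
  -- Lipschitz bound
  have hLip : ∀ s u : ℝ, |g u - g s| ≤ L * |u - s| := by
    intro s u
    have := convex_univ.norm_image_sub_le_of_norm_deriv_le
      (f := g) (C := L) (fun x _ => hgdiff x) (fun x _ => hgL x)
      (Set.mem_univ s) (Set.mem_univ u)
    simpa [Real.norm_eq_abs] using this
  -- the kernel
  set E : ℝ → ℝ := fun s => Real.exp (-(t - s) * a) with hE_def
  have hEcont : Continuous E := by
    apply Real.continuous_exp.comp; fun_prop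
  -- derivative of E
  have hE_deriv : ∀ s : ℝ, HasDerivAt E (a * E s) s := by
    intro s
    have h1 : HasDerivAt (fun s : ℝ => -(t - s) * a) a s := by
      simpa using (((hasDerivAt_id s).const_sub t).neg).mul_const a
    simpa [hE_def, mul_comm] using h1.exp
  -- basic integral of the kernel
  have kernel_int : ∀ c d : ℝ, (∫ s in c..d, a * E s) = E d - E c := by
    intro c d
    have : (∫ s in c..d, a * E s) = E d - E c := by
      apply intervalIntegral.integral_eq_sub_of_hasDerivAt
      · intro x _
        exact hE_deriv x
      · exact (continuous_const.mul hEcont).intervalIntegrable _ _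
    exact this
  -- integral of a*(t-s)*E s on m..t
  have kernel_int2 : (∫ s in m..t, a * ((t - s) * E s)) =
      (1/a) - ((t - m) + 1/a) * E m := by
    have key : ∀ s : ℝ, HasDerivAt (fun s => ((t - s) + 1/a) * E s)
        (a * ((t - s) * E s)) s := by
      intro s
      have h1 : HasDerivAt (fun s : ℝ => (t - s) + 1/a) (-1) s := by
        simpa using (((hasDerivAt_id s).const_sub t)).add_const (1/a)
      have h2 := h1.mul (hE_deriv s)
      refine h2.congr_deriv ?_
      have hinv : 1/a * a = 1 := one_div_mul_cancel ha.ne'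
      linear_combination (E s) * hinv
    have := intervalIntegral.integral_eq_sub_of_hasDerivAt
      (f := fun s => ((t - s) + 1/a) * E s) (a := m) (b := t)
      (fun x _ => key x)
      (by
        apply Continuous.intervalIntegrable
        exact continuous_const.mul ((continuous_const.sub continuous_id).mul hEcont))
    have hEt : E t = 1 := by simp [hE_def]
    rw [this]
    simp only [hEt]
    ring
  have hint_g : ∀ c d : ℝ, IntervalIntegrable (fun s => a * (E s * g s)) volume c d :=
    fun c d => (continuous_const.mul (hEcont.mul hcont)).intervalIntegrable _ _
  have hint_gd : ∀ c d : ℝ, IntervalIntegrable (fun s => a * (E s * (g s - g t))) volume c d :=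
    fun c d => (continuous_const.mul (hEcont.mul (hcont.sub continuous_const))).intervalIntegrable _ _
  -- rewrite the main quantity
  have main_eq : a * (∫ s in (-T)..t, E s * g s) - g t =
      (∫ s in (-T)..m, a * (E s * (g s - g t))) +
      (∫ s in m..t, a * (E s * (g s - g t))) - E (-T) * g t := by
    have h1 : a * (∫ s in (-T)..t, E s * g s) = ∫ s in (-T)..t, a * (E s * g s) := by
      rw [intervalIntegral.integral_const_mul]
    have h2 : (∫ s in (-T)..t, a * (E s * g s)) =
        (∫ s in (-T)..t, a * (E s * (g s - g t))) + (∫ s in (-T)..t, a * E s) * g t := by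
      rw [← intervalIntegral.integral_mul_const]
      rw [← intervalIntegral.integral_add (g := fun s => a * E s * g t) (hint_gd _ _)
        (((continuous_const.mul hEcont).mul continuous_const).intervalIntegrable _ _)]
      congr 1
      ext s
      ring
    have h3 : (∫ s in (-T)..t, a * E s) = 1 - E (-T) := by
      rw [kernel_int]
      simp [hE_def]
    have h4 : (∫ s in (-T)..t, a * (E s * (g s - g t))) =
        (∫ s in (-T)..m, a * (E s * (g s - g t))) +
        (∫ s in m..t, a * (E s * (g s - g t))) := by
      rw [intervalIntegral.integral_add_adjacent_intervals (hint_gd _ _) (hint_gd _ _)]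
    rw [h1, h2, h3, h4]
    ring
  -- positivity of kernel
  have hEpos : ∀ s, 0 < E s := fun s => Real.exp_pos _
  -- bound the far part
  have far_bound : |∫ s in (-T)..m, a * (E s * (g s - g t))| ≤
      2 * C₀ * (E m - E (-T)) := by
    have hb : ∀ᵐ s ∂(volume.restrict (Set.uIoc (-T) m)),
        ‖a * (E s * (g s - g t))‖ ≤ a * (E s * (2 * C₀)) := by
      filter_upwards with s
      rw [Real.norm_eq_abs, abs_mul, abs_mul, abs_of_pos ha, abs_of_pos (hEpos s)]
      gcongr
      calc |g s - g t| ≤ |g s| + |g t| := abs_sub _ _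
        _ ≤ C₀ + C₀ := add_le_add (hgC s) (hgC t)
        _ = 2 * C₀ := by ring
    have := intervalIntegral.norm_integral_le_of_norm_le (g := fun s => a * (E s * (2 * C₀))) hTm
      (by rw [Set.uIoc_of_le hTm] at hb; exact (ae_restrict_iff' measurableSet_Ioc).1 hb)
      ((continuous_const.mul (hEcont.mul continuous_const)).intervalIntegrable _ _)
    rw [Real.norm_eq_abs] at this
    refine this.trans ?_
    have heq : (∫ s in (-T)..m, a * (E s * (2 * C₀))) = 2 * C₀ * (E m - E (-T)) := by
      have : (∫ s in (-T)..m, a * (E s * (2 * C₀))) =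
          (2 * C₀) * ∫ s in (-T)..m, a * E s := by
        rw [← intervalIntegral.integral_const_mul]
        congr 1; ext s; ring
      rw [this, kernel_int]
    rw [heq]
  -- bound the near part
  have near_bound : |∫ s in m..t, a * (E s * (g s - g t))| ≤ L * (1/a) := by
    have hb : ∀ᵐ s ∂(volume.restrict (Set.uIoc m t)),
        ‖a * (E s * (g s - g t))‖ ≤ a * ((t - s) * E s) * L := by
      rw [Set.uIoc_of_le hmt]
      filter_upwards [MeasureTheory.ae_restrict_mem measurableSet_Ioc] with s hs
      rw [Real.norm_eq_abs, abs_mul, abs_mul, abs_of_pos ha, abs_of_pos (hEpos s)]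
      have h1 : |g s - g t| ≤ L * (t - s) := by
        have h := hLip t s
        have habs : |s - t| = t - s := by
          rw [abs_sub_comm]; exact abs_of_nonneg (by linarith [hs.2])
        rwa [habs] at h
      calc a * (E s * |g s - g t|) ≤ a * (E s * (L * (t - s))) := by gcongr
        _ = a * ((t - s) * E s) * L := by ring
    have := intervalIntegral.norm_integral_le_of_norm_le (g := fun s => a * ((t - s) * E s) * L) hmt
      (by rw [Set.uIoc_of_le hmt] at hb; exact (ae_restrict_iff' measurableSet_Ioc).1 hb)
      ((((continuous_const.mul ((continuous_const.sub continuous_id).mul hEcont))).mul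
        continuous_const).intervalIntegrable _ _)
    rw [Real.norm_eq_abs] at this
    refine this.trans ?_
    have heq : (∫ s in m..t, a * ((t - s) * E s) * L) =
        L * ((1/a) - ((t - m) + 1/a) * E m) := by
      rw [intervalIntegral.integral_mul_const, kernel_int2]; ring
    rw [heq]
    have htm : 0 < t - m := by simp only [hm_def]; linarith
    have h0 : 0 ≤ ((t - m) + 1/a) * E m :=
      mul_nonneg (add_pos htm (by positivity)).le (hEpos m).le
    have h1 : (1/a) - ((t - m) + 1/a) * E m ≤ 1/a := by linarith
    have h2 : 0 ≤ (1/a) - ((t - m) + 1/a) * E m := by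
      have := kernel_int2
      rw [← this]
      apply intervalIntegral.integral_nonneg hmt
      intro s hs
      exact mul_nonneg ha.le (mul_nonneg (by linarith [hs.2]) (hEpos s).le)
    nlinarith
  -- key exponential identities
  have hEm : E m = Real.exp (-ε ^ (-δ)) := by
    simp only [hE_def, hm_def]
    congr 1
    have : ε ^ (β - δ) * ε ^ (-β) = ε ^ (-δ) := by
      rw [← Real.rpow_add hε]
      congr 1
      ring
    rw [show -(t - (t - ε ^ (β - δ))) * a = -(ε ^ (β - δ) * ε ^ (-β)) by ring, this]
  have hET : E (-T) ≤ Real.exp (-ε ^ (-δ)) := by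
    rw [← hEm]
    apply Real.exp_le_exp.2
    nlinarith [ha]
  have hinva : 1/a = ε ^ β := by
    rw [ha_def, Real.rpow_neg hε.le, one_div, inv_inv]
  -- conclude
  have hgt : |g t| ≤ C₀ := hgC t
  have habs : |a * (∫ s in (-T)..t, E s * g s) - g t| ≤
      2 * C₀ * (E m - E (-T)) + L * (1/a) + E (-T) * C₀ := by
    rw [main_eq]
    calc |(∫ s in (-T)..m, a * (E s * (g s - g t))) +
        (∫ s in m..t, a * (E s * (g s - g t))) - E (-T) * g t|
        ≤ |∫ s in (-T)..m, a * (E s * (g s - g t))| +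
          |∫ s in m..t, a * (E s * (g s - g t))| + |E (-T) * g t| := by
          exact (abs_sub _ _).trans (by gcongr; exact abs_add_le _ _)
      _ ≤ 2 * C₀ * (E m - E (-T)) + L * (1/a) + E (-T) * C₀ := by
          have h3 : |E (-T) * g t| ≤ E (-T) * C₀ := by
            rw [abs_mul, abs_of_pos (hEpos _)]
            exact mul_le_mul_of_nonneg_left hgt (hEpos _).le
          exact add_le_add (add_le_add far_bound near_bound) h3
  refine habs.trans ?_
  rw [hinva, hEm]
  have hETpos : 0 < E (-T) := hEpos _
  have h5 : 0 ≤ E (-T) * C₀ := mul_nonneg hETpos.le hC₀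
  nlinarith [hET, hC₀, h5]
end
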